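/- Let v₁, v₂, v₃ ∈ ℂ³ be orthonormal with respect to the real inner product Re⟨·,·⟩. Then |Φ(v₁,v₂,v₃)| ≤ 1, and equality holds if and only if ω(v_j, v_k) = 0 for all j, k ∈ {1,2,3}, i.e., if and only if the real span of v₁, v₂, v₃ is a Lagrangian subspace of ℂ³. -/

import Mathlib

/-- The complex volume form `Φ = dz₁ ∧ dz₂ ∧ dz₃` on `ℂ³`, evaluated on the triple
of vectors `v 0, v 1, v 2`: the determinant of the complex matrix with columns
`v 0, v 1, v 2`. -/
noncomputable def PhiForm (v : Fin 3 → EuclideanSpace ℂ (Fin 3)) : ℂ :=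
  (Matrix.of fun i j : Fin 3 => v j i).det

/-- The fundamental (Kähler) 2-form `ω(x, y) = Im ⟨x, y⟩` on `ℂ³`. -/
noncomputable def omegaForm (x y : EuclideanSpace ℂ (Fin 3)) : ℝ :=
  (inner ℂ x y : ℂ).im

lemma real_smul_eq_complex (r : ℝ) (x : EuclideanSpace ℂ (Fin 3)) : r • x = (r : ℂ) • x := by
  rw [← smul_one_smul ℂ r x, Complex.real_smul, mul_one]

lemma inner_self_im_eq_zero (x : EuclideanSpace ℂ (Fin 3)) : (inner ℂ x x : ℂ).im = 0 := by
  have h2 := congrArg Complex.im (inner_conj_symm (𝕜 := ℂ) x x)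
  rw [Complex.conj_im] at h2
  linarith

lemma omega_add_left (x x' y : EuclideanSpace ℂ (Fin 3)) :
    omegaForm (x + x') y = omegaForm x y + omegaForm x' y := by
  simp [omegaForm, inner_add_left]

lemma omega_add_right (x y y' : EuclideanSpace ℂ (Fin 3)) :
    omegaForm x (y + y') = omegaForm x y + omegaForm x y' := by
  simp [omegaForm, inner_add_right]

lemma omega_smul_left (r : ℝ) (x y : EuclideanSpace ℂ (Fin 3)) :
    omegaForm (r • x) y = r * omegaForm x y := by
  rw [omegaForm, omegaForm, real_smul_eq_complex, inner_smul_left]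
  simp only [Complex.conj_ofReal, Complex.mul_im, Complex.ofReal_re, Complex.ofReal_im]
  ring

lemma omega_smul_right (r : ℝ) (x y : EuclideanSpace ℂ (Fin 3)) :
    omegaForm x (r • y) = r * omegaForm x y := by
  rw [omegaForm, omegaForm, real_smul_eq_complex, inner_smul_right]
  simp only [Complex.mul_im, Complex.ofReal_re, Complex.ofReal_im]
  ring

lemma omega_zero_left (y : EuclideanSpace ℂ (Fin 3)) : omegaForm 0 y = 0 := by
  simp [omegaForm]

lemma omega_zero_right (x : EuclideanSpace ℂ (Fin 3)) : omegaForm x 0 = 0 := by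
  simp [omegaForm]

/-- if `v₁, v₂, v₃ ∈ ℂ³` are orthonormal for the real inner product
`Re⟨·,·⟩`, then `|Φ(v₁,v₂,v₃)| ≤ 1`, with equality iff `ω(v_j, v_k) = 0` for all
`j, k`, i.e. iff the real span of `v₁, v₂, v₃` is a Lagrangian subspace of `ℂ³`. -/
theorem abs_Phi_le_one_of_real_orthonormal
    (v : Fin 3 → EuclideanSpace ℂ (Fin 3))
    (hv : ∀ j k : Fin 3, (inner ℂ (v j) (v k) : ℂ).re = if j = k then 1 else 0) :
    ‖PhiForm v‖ ≤ 1 ∧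
    (‖PhiForm v‖ = 1 ↔ ∀ j k : Fin 3, omegaForm (v j) (v k) = 0) ∧
    (‖PhiForm v‖ = 1 ↔
      ∀ x ∈ Submodule.span ℝ (Set.range v), ∀ y ∈ Submodule.span ℝ (Set.range v),
        omegaForm x y = 0) := by
  set a := (inner ℂ (v 0) (v 1) : ℂ).im with ha
  set b := (inner ℂ (v 0) (v 2) : ℂ).im with hb
  set c := (inner ℂ (v 1) (v 2) : ℂ).im with hc
  set M : Matrix (Fin 3) (Fin 3) ℂ := Matrix.of fun i j : Fin 3 => v j i with hM
  have hG : M.conjTranspose * M = Matrix.of fun j k : Fin 3 => (inner ℂ (v j) (v k) : ℂ) := by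
    ext j k
    simp [hM, Matrix.mul_apply, Matrix.conjTranspose_apply, PiLp.inner_apply,
      RCLike.inner_apply, mul_comm]
  -- entry lemmas
  have e00 : (inner ℂ (v 0) (v 0) : ℂ) = 1 := by
    apply Complex.ext
    · rw [hv]; norm_num [Fin.ext_iff]
    · rw [inner_self_im_eq_zero]; norm_num
  have e11 : (inner ℂ (v 1) (v 1) : ℂ) = 1 := by
    apply Complex.ext
    · rw [hv]; norm_num [Fin.ext_iff]
    · rw [inner_self_im_eq_zero]; norm_num
  have e22 : (inner ℂ (v 2) (v 2) : ℂ) = 1 := by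
    apply Complex.ext
    · rw [hv]; norm_num [Fin.ext_iff]
    · rw [inner_self_im_eq_zero]; norm_num
  have e01 : (inner ℂ (v 0) (v 1) : ℂ) = (a : ℂ) * Complex.I := by
    apply Complex.ext
    · rw [hv]; norm_num [Fin.ext_iff]
    · rw [← ha]; simp
  have e02 : (inner ℂ (v 0) (v 2) : ℂ) = (b : ℂ) * Complex.I := by
    apply Complex.ext
    · rw [hv]; norm_num [Fin.ext_iff]
    · rw [← hb]; simp
  have e12 : (inner ℂ (v 1) (v 2) : ℂ) = (c : ℂ) * Complex.I := by
    apply Complex.ext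
    · rw [hv]; norm_num [Fin.ext_iff]
    · rw [← hc]; simp
  have e10 : (inner ℂ (v 1) (v 0) : ℂ) = -((a : ℂ) * Complex.I) := by
    rw [← inner_conj_symm, e01]
    simp [Complex.conj_I, map_mul, Complex.conj_ofReal]
  have e20 : (inner ℂ (v 2) (v 0) : ℂ) = -((b : ℂ) * Complex.I) := by
    rw [← inner_conj_symm, e02]
    simp [Complex.conj_I, map_mul, Complex.conj_ofReal]
  have e21 : (inner ℂ (v 2) (v 1) : ℂ) = -((c : ℂ) * Complex.I) := by
    rw [← inner_conj_symm, e12]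
    simp [Complex.conj_I, map_mul, Complex.conj_ofReal]
  have hdetG : (Matrix.of fun j k : Fin 3 => (inner ℂ (v j) (v k) : ℂ)).det
      = ((1 - (a ^ 2 + b ^ 2 + c ^ 2) : ℝ) : ℂ) := by
    rw [Matrix.det_fin_three]
    simp only [Matrix.of_apply, e00, e01, e02, e10, e11, e12, e20, e21, e22]
    push_cast
    ring_nf
    rw [Complex.I_sq]
    ring
  have hsq : ‖PhiForm v‖ ^ 2 = 1 - (a ^ 2 + b ^ 2 + c ^ 2) := by
    have h1 : ((Complex.normSq (PhiForm v) : ℝ) : ℂ)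
        = ((1 - (a ^ 2 + b ^ 2 + c ^ 2) : ℝ) : ℂ) := by
      rw [Complex.normSq_eq_conj_mul_self]
      have : (starRingEnd ℂ) (PhiForm v) * PhiForm v = (M.conjTranspose * M).det := by
        rw [Matrix.det_mul, Matrix.det_conjTranspose]
        rfl
      rw [this, hG, hdetG]
    have h2 := Complex.ofReal_injective h1
    rw [Complex.sq_norm]
    exact h2
  have habs0 : 0 ≤ ‖PhiForm v‖ := norm_nonneg _
  have hle : ‖PhiForm v‖ ≤ 1 := by nlinarith [sq_nonneg a, sq_nonneg b, sq_nonneg c]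
  -- the first iff
  have hiff1 : ‖PhiForm v‖ = 1 ↔ ∀ j k : Fin 3, omegaForm (v j) (v k) = 0 := by
    constructor
    · intro h
      have hs : a ^ 2 + b ^ 2 + c ^ 2 = 0 := by nlinarith
      have ha0 : a = 0 := by nlinarith [sq_nonneg a, sq_nonneg b, sq_nonneg c]
      have hb0 : b = 0 := by nlinarith [sq_nonneg a, sq_nonneg b, sq_nonneg c]
      have hc0 : c = 0 := by nlinarith [sq_nonneg a, sq_nonneg b, sq_nonneg c]
      intro j k
      fin_cases j <;> fin_cases k <;>
        simp only [omegaForm] <;>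
        simp [-inner_self_eq_norm_sq_to_K, e00, e01, e02, e10, e11, e12, e20, e21, e22, ha0, hb0, hc0]
    · intro h
      have ha0 : a = 0 := h 0 1
      have hb0 : b = 0 := h 0 2
      have hc0 : c = 0 := h 1 2
      have : ‖PhiForm v‖ ^ 2 = 1 := by rw [hsq, ha0, hb0, hc0]; ring
      nlinarith
  refine ⟨hle, hiff1, ?_⟩
  rw [hiff1]
  constructor
  · intro h x hx y hy
    induction hx using Submodule.span_induction with
    | mem x hxm =>
      induction hy using Submodule.span_induction with
      | mem y hym =>
        obtain ⟨j, rfl⟩ := hxm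
        obtain ⟨k, rfl⟩ := hym
        exact h j k
      | zero => exact omega_zero_right _
      | add y y' _ _ ih1 ih2 => rw [omega_add_right, ih1, ih2]; ring
      | smul r y _ ih => rw [omega_smul_right, ih]; ring
    | zero => exact omega_zero_left _
    | add x x' _ _ ih1 ih2 => rw [omega_add_left, ih1 , ih2]; ring
    | smul r x _ ih => rw [omega_smul_left, ih]; ring
  · intro h j k
    exact h (v j) (Submodule.subset_span (Set.mem_range_self j))
      (v k) (Submodule.subset_span (Set.mem_range_self k))
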